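/- Let d be a metric on n points and T* a minimum-length Hamiltonian cycle. Then Δ = Σ_i Σ_{j≠i} d(i,j) ≤ (n²/4)·d(T*). -/

import Mathlib

lemma revsum : ∀ k : ℕ, ∑ j ∈ Finset.range k, (k - j) = ∑ j ∈ Finset.range (k+1), j := by
  intro k; induction k with
  | zero => simp
  | succ k ih =>
    rw [Finset.sum_range_succ' (fun j => k + 1 - j) k]
    simp only [Nat.succ_sub_succ]
    rw [ih, Finset.sum_range_succ (fun j => j) (k+1)]
    omega

lemma minsum (m : ℕ) (hm : 1 ≤ m) :
    ∑ c ∈ Finset.range (2*m), min c (2*m - c) = m^2 := by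
  obtain ⟨k, rfl⟩ : ∃ k, m = k + 1 := ⟨m - 1, by omega⟩
  rw [← Finset.sum_range_add_sum_Ico (fun c => min c (2*(k+1) - c)) (show (k+1)+1 ≤ 2*(k+1) by omega)]
  have h1 : ∑ c ∈ Finset.range ((k+1)+1), min c (2*(k+1)-c) = ∑ c ∈ Finset.range (k+2), c :=
    Finset.sum_congr rfl (fun c hc => by simp only [Finset.mem_range] at hc; omega)
  have h2 : ∑ c ∈ Finset.Ico ((k+1)+1) (2*(k+1)), min c (2*(k+1)-c)
      = ∑ j ∈ Finset.range k, (k - j) := by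
    rw [Finset.sum_Ico_eq_sum_range]
    have h3 : 2*(k+1) - ((k+1)+1) = k := by omega
    rw [h3]
    exact Finset.sum_congr rfl (fun j hj => by simp only [Finset.mem_range] at hj; omega)
  rw [h1, h2, revsum]
  have e1 := Finset.sum_range_id_mul_two (k+2)
  have e2 := Finset.sum_range_id_mul_two (k+1)
  simp only [show k+2-1 = k+1 from rfl] at e1
  simp only [show k+1-1 = k from rfl] at e2
  have h : ((∑ c ∈ Finset.range (k+2), c) + (∑ j ∈ Finset.range (k+1), j)) * 2
      = ((k+1)^2) * 2 := by rw [add_mul, e1, e2]; ring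
  exact Nat.eq_of_mul_eq_mul_right (by norm_num) h

open Fin.NatCast in
theorem stmt_12 (n : ℕ) [NeZero n] (hn : Even n) (h4 : 4 ≤ n) (V : Type) [Fintype V] [DecidableEq V]
    (hcard : Fintype.card V = n)
    (d : V → V → ℝ) (hnonneg : ∀ x y, 0 ≤ d x y) (hsymm : ∀ x y, d x y = d y x)
    (htri : ∀ x y z, d x z ≤ d x y + d y z) (hrefl : ∀ x, d x x = 0)
    (σ : Fin n ≃ V) (hmin : ∀ τ : Fin n ≃ V,
      ∑ i : Fin n, d (σ i) (σ (i + 1)) ≤ ∑ i : Fin n, d (τ i) (τ (i + 1))) :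
    ∑ i : V, ∑ j ∈ Finset.univ \ {i}, d i j
      ≤ ((n : ℝ) ^ 2 / 4) * ∑ i : Fin n, d (σ i) (σ (i + 1)) := by
  set L := ∑ i : Fin n, d (σ i) (σ (i + 1)) with hL
  have hL0 : 0 ≤ L := Finset.sum_nonneg fun i _ => hnonneg _ _
  have hshift : ∀ t : Fin n, ∑ a : Fin n, d (σ (a + t)) (σ (a + t + 1)) = L := by
    intro t
    exact Equiv.sum_comp (Equiv.addRight t) (fun b => d (σ b) (σ (b + 1)))
  have harc : ∀ (k : ℕ) (a : Fin n), d (σ a) (σ (a + (k : Fin n)))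
      ≤ ∑ j ∈ Finset.range k, d (σ (a + (j : Fin n))) (σ (a + (j : Fin n) + 1)) := by
    intro k
    induction k with
    | zero => intro a; simp [hrefl]
    | succ k ih =>
      intro a
      rw [Finset.sum_range_succ]
      have hc : ((k+1 : ℕ) : Fin n) = (k : Fin n) + 1 := by push_cast; ring
      calc d (σ a) (σ (a + ((k+1:ℕ) : Fin n)))
          ≤ d (σ a) (σ (a + (k : Fin n))) + d (σ (a + (k:Fin n))) (σ (a + ((k+1:ℕ):Fin n))) :=
            htri _ _ _
        _ ≤ _ := by rw [hc, ← add_assoc]; exact add_le_add_left (ih a) _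
  have hcol : ∀ k : ℕ, ∑ a : Fin n, d (σ a) (σ (a + (k : Fin n))) ≤ (k : ℝ) * L := by
    intro k
    calc ∑ a : Fin n, d (σ a) (σ (a + (k:Fin n)))
        ≤ ∑ a : Fin n, ∑ j ∈ Finset.range k, d (σ (a + (j:Fin n))) (σ (a + (j:Fin n) + 1)) :=
          Finset.sum_le_sum (fun a _ => harc k a)
      _ = ∑ j ∈ Finset.range k, ∑ a : Fin n, d (σ (a + (j:Fin n))) (σ (a + (j:Fin n) + 1)) :=
          Finset.sum_comm
      _ = ∑ _j ∈ Finset.range k, L := Finset.sum_congr rfl (fun j _ => hshift _)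
      _ = (k : ℝ) * L := by simp [nsmul_eq_mul]
  have hS : ∀ c : Fin n, ∑ a : Fin n, d (σ a) (σ (a + c))
      ≤ ((min c.val (n - c.val) : ℕ) : ℝ) * L := by
    intro c
    have b1 : ∑ a : Fin n, d (σ a) (σ (a + c)) ≤ (c.val : ℝ) * L := by
      have := hcol c.val
      rwa [Fin.cast_val_eq_self c] at this
    have b2 : ∑ a : Fin n, d (σ a) (σ (a + c)) ≤ ((n - c.val : ℕ) : ℝ) * L := by
      have hz : c + ((n - c.val : ℕ) : Fin n) = 0 := by
        have h0 : ((c.val + (n - c.val) : ℕ) : Fin n) = 0 := by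
          rw [Nat.add_sub_cancel' c.isLt.le]; exact Fin.natCast_self n
        rw [← h0, Nat.cast_add, Fin.cast_val_eq_self]
      have heach : ∀ a : Fin n,
          d (σ a) (σ (a + c)) = d (σ (a + c)) (σ ((a + c) + ((n - c.val : ℕ) : Fin n))) := by
        intro a
        rw [add_assoc, hz, add_zero]
        exact hsymm _ _
      calc ∑ a : Fin n, d (σ a) (σ (a + c))
          = ∑ a : Fin n, d (σ (a + c)) (σ ((a + c) + ((n - c.val : ℕ) : Fin n))) :=
            Finset.sum_congr rfl (fun a _ => heach a)
        _ = ∑ b : Fin n, d (σ b) (σ (b + ((n - c.val : ℕ) : Fin n))) :=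
            Equiv.sum_comp (Equiv.addRight c)
              (fun b => d (σ b) (σ (b + ((n - c.val : ℕ) : Fin n))))
        _ ≤ _ := hcol (n - c.val)
    rcases le_total c.val (n - c.val) with h | h
    · rw [min_eq_left h]; exact b1
    · rw [min_eq_right h]; exact b2
  have hLHS : ∑ i : V, ∑ j ∈ Finset.univ \ {i}, d i j
      = ∑ c : Fin n, ∑ a : Fin n, d (σ a) (σ (a + c)) := by
    have hinner : ∀ v : V, ∑ j ∈ Finset.univ \ {v}, d v j = ∑ j : V, d v j := by
      intro v
      rw [show (Finset.univ \ {v} : Finset V) = Finset.univ.erase v by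
        ext x; simp [Finset.mem_erase, and_comm, eq_comm]]
      exact Finset.sum_erase _ (hrefl v)
    calc ∑ i : V, ∑ j ∈ Finset.univ \ {i}, d i j
        = ∑ i : V, ∑ j : V, d i j := Finset.sum_congr rfl (fun i _ => hinner i)
      _ = ∑ a : Fin n, ∑ j : V, d (σ a) j := (Equiv.sum_comp σ (fun v => ∑ j : V, d v j)).symm
      _ = ∑ a : Fin n, ∑ b : Fin n, d (σ a) (σ b) :=
          Finset.sum_congr rfl (fun a _ => (Equiv.sum_comp σ (fun v => d (σ a) v)).symm)
      _ = ∑ a : Fin n, ∑ c : Fin n, d (σ a) (σ (a + c)) :=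
          Finset.sum_congr rfl
            (fun a _ => (Equiv.sum_comp (Equiv.addLeft a) (fun b => d (σ a) (σ b))).symm)
      _ = ∑ c, ∑ a, d (σ a) (σ (a + c)) := Finset.sum_comm
  rw [hLHS]
  have step : ∑ c : Fin n, ∑ a : Fin n, d (σ a) (σ (a + c))
      ≤ ∑ c : Fin n, ((min c.val (n - c.val) : ℕ) : ℝ) * L :=
    Finset.sum_le_sum (fun c _ => hS c)
  refine step.trans ?_
  have hsum : ∑ c : Fin n, ((min c.val (n - c.val) : ℕ) : ℝ) * L
      = ((∑ c ∈ Finset.range n, min c (n - c) : ℕ) : ℝ) * L := by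
    rw [← Finset.sum_mul]
    congr 1
    rw [Nat.cast_sum, ← Fin.sum_univ_eq_sum_range (fun x => ((min x (n - x) : ℕ) : ℝ)) n]
  rw [hsum]
  obtain ⟨m, hm⟩ := hn
  have hn2 : n = 2 * m := by omega
  have hval := minsum m (by omega)
  rw [← hn2] at hval
  rw [hval]
  have hcast : ((m ^ 2 : ℕ) : ℝ) = (n : ℝ) ^ 2 / 4 := by rw [hn2]; push_cast; ring
  rw [hcast]
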